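/- Let μ ∈ ℍ be nonzero and let f₁, f₂, f₃, f₄ ∈ ℍ. If f₁·h^μ + f₂·h^{μi} + f₃·h^{μj} + f₄·h^{μk} = 0 for every h ∈ ℍ, then f₁ = f₂ = f₃ = f₄ = 0. -/

import Mathlib

open Quaternion Filter Topology Asymptotics

noncomputable section

/-- The imaginary unit `i` of the real quaternions. -/
def qI : ℍ[ℝ] := ⟨0, 1, 0, 0⟩
/-- The imaginary unit `j` of the real quaternions. -/
def qJ : ℍ[ℝ] := ⟨0, 0, 1, 0⟩
/-- The imaginary unit `k` of the real quaternions. -/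
def qK : ℍ[ℝ] := ⟨0, 0, 0, 1⟩

/-- Quaternion rotation `p ↦ μ p μ⁻¹`. -/
def qRot (μ p : ℍ[ℝ]) : ℍ[ℝ] := μ * p * μ⁻¹

/-- The left GHR derivative `∂f/∂q^μ` at `q`. -/
def lD (f : ℍ[ℝ] → ℍ[ℝ]) (μ q : ℍ[ℝ]) : ℍ[ℝ] :=
  (4 : ℍ[ℝ])⁻¹ * (fderiv ℝ f q 1 - fderiv ℝ f q qI * qRot μ qI
    - fderiv ℝ f q qJ * qRot μ qJ - fderiv ℝ f q qK * qRot μ qK)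

/-- The left conjugate GHR derivative `∂f/∂q^{μ*}` at `q`. -/
def lDc (f : ℍ[ℝ] → ℍ[ℝ]) (μ q : ℍ[ℝ]) : ℍ[ℝ] :=
  (4 : ℍ[ℝ])⁻¹ * (fderiv ℝ f q 1 + fderiv ℝ f q qI * qRot μ qI
    + fderiv ℝ f q qJ * qRot μ qJ + fderiv ℝ f q qK * qRot μ qK)

/-- The right GHR derivative `∂ᵣf/∂q^μ` at `q`. -/
def rD (f : ℍ[ℝ] → ℍ[ℝ]) (μ q : ℍ[ℝ]) : ℍ[ℝ] :=
  (4 : ℍ[ℝ])⁻¹ * (fderiv ℝ f q 1 - qRot μ qI * fderiv ℝ f q qI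
    - qRot μ qJ * fderiv ℝ f q qJ - qRot μ qK * fderiv ℝ f q qK)

/-- The right conjugate GHR derivative `∂ᵣf/∂q^{μ*}` at `q`. -/
def rDc (f : ℍ[ℝ] → ℍ[ℝ]) (μ q : ℍ[ℝ]) : ℍ[ℝ] :=
  (4 : ℍ[ℝ])⁻¹ * (fderiv ℝ f q 1 + qRot μ qI * fderiv ℝ f q qI
    + qRot μ qJ * fderiv ℝ f q qJ + qRot μ qK * fderiv ℝ f q qK)


lemma qI_inv : qI⁻¹ = -qI := by
  refine inv_eq_of_mul_eq_one_right ?_; ext <;> simp <;> simp [qI]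
lemma qJ_inv : qJ⁻¹ = -qJ := by
  refine inv_eq_of_mul_eq_one_right ?_; ext <;> simp <;> simp [qJ]
lemma qK_inv : qK⁻¹ = -qK := by
  refine inv_eq_of_mul_eq_one_right ?_; ext <;> simp <;> simp [qK]
lemma qI_ne : qI ≠ 0 := by
  intro hc; have := congrArg QuaternionAlgebra.imI hc; simp [qI] at this

lemma qRot_mul (μ ν p : ℍ[ℝ]) : qRot (μ * ν) p = qRot μ (qRot ν p) := by
  simp [qRot, mul_inv_rev, mul_assoc]

lemma qRot_neg (μ p : ℍ[ℝ]) : qRot μ (-p) = -qRot μ p := by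
  simp [qRot]

lemma qRot_one (μ : ℍ[ℝ]) (hμ : μ ≠ 0) : qRot μ 1 = 1 := by
  simp [qRot, mul_inv_cancel₀ hμ]

lemma qRotII : qRot qI qI = qI := by rw [qRot, qI_inv]; ext <;> simp <;> simp [qI]
lemma qRotJI : qRot qJ qI = -qI := by rw [qRot, qJ_inv]; ext <;> simp <;> simp [qI, qJ]
lemma qRotKI : qRot qK qI = -qI := by rw [qRot, qK_inv]; ext <;> simp <;> simp [qI, qK]
lemma qRotIJ : qRot qI qJ = -qJ := by rw [qRot, qI_inv]; ext <;> simp <;> simp [qI, qJ]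
lemma qRotJJ : qRot qJ qJ = qJ := by rw [qRot, qJ_inv]; ext <;> simp <;> simp [qJ]
lemma qRotKJ : qRot qK qJ = -qJ := by rw [qRot, qK_inv]; ext <;> simp <;> simp [qJ, qK]
lemma qRotIK : qRot qI qK = -qK := by rw [qRot, qI_inv]; ext <;> simp <;> simp [qI, qK]
lemma qRotJK : qRot qJ qK = -qK := by rw [qRot, qJ_inv]; ext <;> simp <;> simp [qJ, qK]
lemma qRotKK : qRot qK qK = qK := by rw [qRot, qK_inv]; ext <;> simp <;> simp [qK]

theorem left_rotated_differentials_independent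
    (μ : ℍ[ℝ]) (hμ : μ ≠ 0) (f₁ f₂ f₃ f₄ : ℍ[ℝ])
    (h : ∀ p : ℍ[ℝ], f₁ * qRot μ p + f₂ * qRot (μ * qI) p
      + f₃ * qRot (μ * qJ) p + f₄ * qRot (μ * qK) p = 0) :
    f₁ = 0 ∧ f₂ = 0 ∧ f₃ = 0 ∧ f₄ = 0 := by
  have hI1 : qI ≠ 0 := qI_ne
  have hRμ : ∀ p : ℍ[ℝ], p ≠ 0 → qRot μ p ≠ 0 := fun p hp =>
    mul_ne_zero (mul_ne_zero hμ hp) (inv_ne_zero hμ)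
  -- the four equations
  have e1 : f₁ + f₂ + f₃ + f₄ = 0 := by
    have := h 1
    simp only [qRot_mul, qRot_one qI qI_ne,
      qRot_one qJ (by intro hc; have := congrArg QuaternionAlgebra.imJ hc; simp [qJ] at this),
      qRot_one qK (by intro hc; have := congrArg QuaternionAlgebra.imK hc; simp [qK] at this),
      qRot_one μ hμ, mul_one] at this
    exact this
  have key : ∀ (x : ℍ[ℝ]), x ≠ 0 →
      f₁ * qRot μ x + f₂ * qRot μ x + f₃ * (-qRot μ x) + f₄ * (-qRot μ x) = 0 →
      f₁ + f₂ - f₃ - f₄ = 0 := by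
    intro x hx hs
    have h2 : (f₁ + f₂ - f₃ - f₄) * qRot μ x = 0 := by
      calc (f₁ + f₂ - f₃ - f₄) * qRot μ x
          = f₁ * qRot μ x + f₂ * qRot μ x + f₃ * (-qRot μ x) + f₄ * (-qRot μ x) := by
            noncomm_ring
        _ = 0 := hs
    exact (mul_eq_zero.mp h2).resolve_right (hRμ x hx)
  have key' : ∀ (x : ℍ[ℝ]), x ≠ 0 →
      f₁ * qRot μ x + f₂ * (-qRot μ x) + f₃ * qRot μ x + f₄ * (-qRot μ x) = 0 →
      f₁ - f₂ + f₃ - f₄ = 0 := by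
    intro x hx hs
    have h2 : (f₁ - f₂ + f₃ - f₄) * qRot μ x = 0 := by
      calc (f₁ - f₂ + f₃ - f₄) * qRot μ x
          = f₁ * qRot μ x + f₂ * (-qRot μ x) + f₃ * qRot μ x + f₄ * (-qRot μ x) := by
            noncomm_ring
        _ = 0 := hs
    exact (mul_eq_zero.mp h2).resolve_right (hRμ x hx)
  have key'' : ∀ (x : ℍ[ℝ]), x ≠ 0 →
      f₁ * qRot μ x + f₂ * (-qRot μ x) + f₃ * (-qRot μ x) + f₄ * qRot μ x = 0 →
      f₁ - f₂ - f₃ + f₄ = 0 := by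
    intro x hx hs
    have h2 : (f₁ - f₂ - f₃ + f₄) * qRot μ x = 0 := by
      calc (f₁ - f₂ - f₃ + f₄) * qRot μ x
          = f₁ * qRot μ x + f₂ * (-qRot μ x) + f₃ * (-qRot μ x) + f₄ * qRot μ x := by
            noncomm_ring
        _ = 0 := hs
    exact (mul_eq_zero.mp h2).resolve_right (hRμ x hx)
  have e2 : f₁ + f₂ - f₃ - f₄ = 0 := by
    refine key qI qI_ne ?_
    have := h qI
    simp only [qRot_mul, qRotII, qRotJI, qRotKI, qRot_neg] at this
    exact this
  have e3 : f₁ - f₂ + f₃ - f₄ = 0 := by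
    refine key' qJ (by intro hc; have := congrArg QuaternionAlgebra.imJ hc; simp [qJ] at this) ?_
    have := h qJ
    simp only [qRot_mul, qRotIJ, qRotJJ, qRotKJ, qRot_neg] at this
    exact this
  have e4 : f₁ - f₂ - f₃ + f₄ = 0 := by
    refine key'' qK (by intro hc; have := congrArg QuaternionAlgebra.imK hc; simp [qK] at this) ?_
    have := h qK
    simp only [qRot_mul, qRotIK, qRotJK, qRotKK, qRot_neg] at this
    exact this
  have h4 : (4 : ℍ[ℝ]) ≠ 0 := by
    intro hc
    have h' : ((4:ℕ) : ℍ[ℝ]) = 0 := by exact_mod_cast hc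
    have := congrArg QuaternionAlgebra.re h'
    rw [Quaternion.re_natCast] at this
    norm_num at this
  have hf1 : f₁ = 0 := by
    have : (4 : ℍ[ℝ]) * f₁ = 0 := by
      calc (4 : ℍ[ℝ]) * f₁
          = (f₁ + f₂ + f₃ + f₄) + (f₁ + f₂ - f₃ - f₄)
            + ((f₁ - f₂ + f₃ - f₄) + (f₁ - f₂ - f₃ + f₄)) := by noncomm_ring
        _ = 0 := by rw [e1, e2, e3, e4]; simp
    exact (mul_eq_zero.mp this).resolve_left h4
  have hf2 : f₂ = 0 := by
    have : (4 : ℍ[ℝ]) * f₂ = 0 := by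
      calc (4 : ℍ[ℝ]) * f₂
          = (f₁ + f₂ + f₃ + f₄) + (f₁ + f₂ - f₃ - f₄)
            - ((f₁ - f₂ + f₃ - f₄) + (f₁ - f₂ - f₃ + f₄)) := by noncomm_ring
        _ = 0 := by rw [e1, e2, e3, e4]; simp
    exact (mul_eq_zero.mp this).resolve_left h4
  have hf3 : f₃ = 0 := by
    have : (4 : ℍ[ℝ]) * f₃ = 0 := by
      calc (4 : ℍ[ℝ]) * f₃
          = (f₁ + f₂ + f₃ + f₄) - (f₁ + f₂ - f₃ - f₄)
            + ((f₁ - f₂ + f₃ - f₄) - (f₁ - f₂ - f₃ + f₄)) := by noncomm_ring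
        _ = 0 := by rw [e1, e2, e3, e4]; simp
    exact (mul_eq_zero.mp this).resolve_left h4
  have hf4 : f₄ = 0 := by
    have : (4 : ℍ[ℝ]) * f₄ = 0 := by
      calc (4 : ℍ[ℝ]) * f₄
          = (f₁ + f₂ + f₃ + f₄) - (f₁ + f₂ - f₃ - f₄)
            - ((f₁ - f₂ + f₃ - f₄) - (f₁ - f₂ - f₃ + f₄)) := by noncomm_ring
        _ = 0 := by rw [e1, e2, e3, e4]; simp
    exact (mul_eq_zero.mp this).resolve_left h4
  exact ⟨hf1, hf2, hf3, hf4⟩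

end
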